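/- Assume in addition that for every τ ∈ ℝ the map y ↦ V(τ, y) is Fréchet differentiable and that the map (τ, y) ↦ D_yV(τ, y) is continuous on ℝ × ℝⁿ. Let θ be a local flow map for V on I₀, fix τ₀ ∈ I₀ and x ∈ ℝⁿ, and let Y(τ) := D_x θ(τ, τ₀, x) ∈ L(ℝⁿ, ℝⁿ) denote the Fréchet derivative of θ with respect to the third variable. Then Y satisfies the linear variational equation: Y(τ₀) = id, the map τ ↦ Y(τ) is differentiable on I₀, and Y'(τ) = D_yV(τ, θ(τ, τ₀, x)) ∘ Y(τ) for all τ ∈ I₀. -/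

import Mathlib

/-- A *local flow map* for `V` on `I₀`: for every `(τ₀, x) ∈ I₀ × ℝⁿ`, the curve
`τ ↦ θ τ τ₀ x` is differentiable on `I₀`, satisfies `θ τ₀ τ₀ x = x`, and
`∂θ/∂τ (τ, τ₀, x) = V (τ, θ τ τ₀ x)` for all `τ ∈ I₀`. -/
def IsLocalFlowMap {n : ℕ}
    (V : ℝ × EuclideanSpace ℝ (Fin n) → EuclideanSpace ℝ (Fin n))
    (I₀ : Set ℝ)
    (θ : ℝ → ℝ → EuclideanSpace ℝ (Fin n) → EuclideanSpace ℝ (Fin n)) : Prop :=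
  ∀ τ₀ ∈ I₀, ∀ x : EuclideanSpace ℝ (Fin n),
    θ τ₀ τ₀ x = x ∧
    ∀ τ ∈ I₀, HasDerivAt (fun s => θ s τ₀ x) (V (τ, θ τ τ₀ x)) τ

open Real Set Topology Filter

lemma gronwallBound_mono_x {δ K ε : ℝ} (hδ : 0 ≤ δ) (hK : 0 < K) (hε : 0 ≤ ε)
    {x y : ℝ} (h : x ≤ y) : gronwallBound δ K ε x ≤ gronwallBound δ K ε y := by
  rw [gronwallBound_of_K_ne_0 hK.ne']
  have hexp : Real.exp (K * x) ≤ Real.exp (K * y) :=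
    Real.exp_le_exp.2 (mul_le_mul_of_nonneg_left h hK.le)
  have h2 : 0 ≤ ε / K := div_nonneg hε hK.le
  nlinarith

lemma gronwall_two_sided {F : Type*} [NormedAddCommGroup F] [NormedSpace ℝ F]
    {f f' : ℝ → F} {p q τ₀ : ℝ} {δ K ε : ℝ} (hK : 0 < K) (hε : 0 ≤ ε)
    (hp : p < τ₀) (hq : τ₀ < q)
    (hcont : ContinuousOn f (Set.Icc p q))
    (hd : ∀ t ∈ Set.Ioo p q, HasDerivAt f (f' t) t)
    (h0 : ‖f τ₀‖ ≤ δ)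
    (hb : ∀ t ∈ Set.Ioo p q, ‖f' t‖ ≤ K * ‖f t‖ + ε) :
    ∀ t ∈ Set.Icc p q, ‖f t‖ ≤ gronwallBound δ K ε (q - p) := by
  have hδ : 0 ≤ δ := le_trans (norm_nonneg _) h0
  -- right half
  have hr : ∀ s ∈ Icc τ₀ q, ‖f s‖ ≤ gronwallBound δ K ε (s - τ₀) := by
    apply norm_le_gronwallBound_of_norm_deriv_right_le
      (hcont.mono (Icc_subset_Icc hp.le le_rfl))
      (fun s hs => (hd s ⟨lt_of_lt_of_le hp hs.1, hs.2⟩).hasDerivWithinAt) h0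
      (fun s hs => hb s ⟨lt_of_lt_of_le hp hs.1, hs.2⟩)
  -- left half, by reversing time
  have hmaps : ∀ s ∈ Icc τ₀ (2*τ₀ - p), 2*τ₀ - s ∈ Icc p q := by
    intro s hs
    constructor
    · linarith [hs.2]
    · linarith [hs.1]
  have hgc : ContinuousOn (fun s => f (2*τ₀ - s)) (Icc τ₀ (2*τ₀ - p)) := by
    apply hcont.comp (Continuous.continuousOn (by continuity)) hmaps
  have hl : ∀ s ∈ Icc τ₀ (2*τ₀ - p), ‖f (2*τ₀ - s)‖ ≤ gronwallBound δ K ε (s - τ₀) := by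
    apply norm_le_gronwallBound_of_norm_deriv_right_le (f' := fun s => -f' (2*τ₀ - s)) hgc
    · intro s hs
      have hmem : 2*τ₀ - s ∈ Ioo p q := by
        constructor
        · linarith [hs.2]
        · linarith [hs.1]
      have h1 : HasDerivAt (fun s : ℝ => 2*τ₀ - s) (-1) s := by
        exact (hasDerivAt_id' s).const_sub (2*τ₀)
      have h2 := (hd _ hmem).scomp s h1
      simp only [Function.comp_def, neg_one_smul] at h2
      exact h2.hasDerivWithinAt
    · rw [show 2*τ₀ - τ₀ = τ₀ by ring]; exact h0
    · intro s hs
      have hmem : 2*τ₀ - s ∈ Ioo p q := by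
        constructor
        · linarith [hs.2]
        · linarith [hs.1]
      simpa using hb _ hmem
  intro t ht
  rcases le_total τ₀ t with h | h
  · exact (hr t ⟨h, ht.2⟩).trans (gronwallBound_mono_x hδ hK hε (by linarith [ht.1, ht.2]))
  · have h2 : 2*τ₀ - t ∈ Icc τ₀ (2*τ₀ - p) := ⟨by linarith, by linarith [ht.1]⟩
    have := hl _ h2
    simp only [show 2*τ₀ - (2*τ₀ - t) = t by ring] at this
    exact this.trans (gronwallBound_mono_x hδ hK hε (by linarith [ht.1, ht.2]))

theorem variational_master {F : Type*} [NormedAddCommGroup F] [NormedSpace ℝ F] [CompleteSpace F]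
    (V : ℝ × F → F) (C : ℝ) (hC : 0 < C)
    (hVlip : ∀ (τ : ℝ) (y₁ y₂ : F), ‖V (τ, y₁) - V (τ, y₂)‖ ≤ C * ‖y₁ - y₂‖)
    (hVdiff : ∀ τ : ℝ, Differentiable ℝ (fun y => V (τ, y)))
    (hDVcont : Continuous (fun pr : ℝ × F => fderiv ℝ (fun y => V (pr.1, y)) pr.2))
    (a b : ℝ) (hlen : b - a < 1 / C)
    (u : F → ℝ → F) (τ₀ : ℝ) (x : F)
    (hu0 : ∀ z, u z τ₀ = z)
    (hud : ∀ z, ∀ τ ∈ Set.Ioo a b, HasDerivAt (u z) (V (τ, u z τ)) τ)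
    (p q : ℝ) (hap : a < p) (hpτ : p < τ₀) (hτq : τ₀ < q) (hqb : q < b) :
    ∃ Y : ℝ → (F →L[ℝ] F), Y τ₀ = ContinuousLinearMap.id ℝ F ∧
      (∀ t ∈ Set.Icc p q, HasFDerivAt (fun z => u z t) (Y t) x) ∧
      ∀ t ∈ Set.Ioo p q, HasDerivAt Y ((fderiv ℝ (fun y => V (t, y)) (u x t)).comp (Y t)) t := by
  have hIcc : Icc p q ⊆ Ioo a b := fun t ht => ⟨lt_of_lt_of_le hap ht.1, lt_of_le_of_lt ht.2 hqb⟩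
  have hIoo : Ioo p q ⊆ Ioo a b := fun t ht => hIcc ⟨ht.1.le, ht.2.le⟩
  have hτ₀I : τ₀ ∈ Ioo a b := hIcc ⟨hpτ.le, hτq.le⟩
  -- the coefficient of the variational equation
  set A : ℝ → (F →L[ℝ] F) := fun t => fderiv ℝ (fun y => V (t, y)) (u x t) with hA
  -- norm bound on all fderivs of V in y
  have hDVnorm : ∀ (t : ℝ) (y : F), ‖fderiv ℝ (fun y' => V (t, y')) y‖ ≤ C := by
    intro t y
    have hl : LipschitzWith ⟨C, hC.le⟩ (fun y' => V (t, y')) := by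
      apply LipschitzWith.of_dist_le_mul
      intro y₁ y₂
      rw [dist_eq_norm, dist_eq_norm]
      exact hVlip t y₁ y₂
    exact norm_fderiv_le_of_lipschitz ℝ hl
  have hAnorm : ∀ t, ‖A t‖ ≤ C := fun t => hDVnorm t _
  -- continuity of curves
  have hucont : ∀ z, ContinuousOn (u z) (Ioo a b) := by
    intro z t ht
    exact ((hud z t ht).continuousAt).continuousWithinAt
  -- continuity of A on (a,b)
  have hAcont : ContinuousOn A (Ioo a b) := by
    have : ContinuousOn (fun t : ℝ => ((t, u x t) : ℝ × F)) (Ioo a b) :=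
      (continuous_id.continuousOn).prodMk (hucont x)
    exact hDVcont.comp_continuousOn this
  -- existence of solution to the variational equation, via Picard-Lindelöf
  obtain ⟨Y, hY0, hYd⟩ : ∃ Y : ℝ → (F →L[ℝ] F), Y τ₀ = ContinuousLinearMap.id ℝ F ∧
      ∀ t ∈ Icc p q, HasDerivWithinAt Y ((A t).comp (Y t)) (Icc p q) t := by
    set R : ℝ := C * (b - a) / (1 - C * (b - a)) with hR
    have hCba : 0 < 1 - C * (b - a) := by
      have : C * (b - a) < C * (1 / C) := by
        apply mul_lt_mul_of_pos_left hlen hC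
      rw [mul_one_div_cancel hC.ne'] at this
      linarith
    have hba : 0 < b - a := by
      nlinarith
    have hR0 : 0 ≤ R := by positivity
    have hpl : IsPicardLindelof (fun t W => (A t).comp W) (tmin := p) (tmax := q)
        ⟨τ₀, hpτ.le, hτq.le⟩ (ContinuousLinearMap.id ℝ F) ⟨R, hR0⟩ 0
        ⟨C * (1 + R), by positivity⟩ ⟨C, hC.le⟩ := by
      constructor
      · intro t ht
        apply LipschitzOnWith.of_dist_le_mul
        intro W₁ _ W₂ _
        rw [dist_eq_norm, dist_eq_norm, ← ContinuousLinearMap.comp_sub]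
        calc ‖(A t).comp (W₁ - W₂)‖ ≤ ‖A t‖ * ‖W₁ - W₂‖ := ContinuousLinearMap.opNorm_comp_le _ _
          _ ≤ C * ‖W₁ - W₂‖ := by
              apply mul_le_mul_of_nonneg_right (hAnorm t) (norm_nonneg _)
      · intro W _
        have : ContinuousOn (fun t => (A t).comp W) (Ioo a b) := by
          exact (((ContinuousLinearMap.compL ℝ F F F).flip W).continuous).comp_continuousOn hAcont
        exact this.mono hIcc
      · intro t ht W hW
        have hWn : ‖W‖ ≤ 1 + R := by
          have : ‖W - ContinuousLinearMap.id ℝ F‖ ≤ R := mem_closedBall_iff_norm.1 hW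
          have h1 : ‖(ContinuousLinearMap.id ℝ F)‖ ≤ 1 := ContinuousLinearMap.norm_id_le
          calc ‖W‖ = ‖(W - ContinuousLinearMap.id ℝ F) + ContinuousLinearMap.id ℝ F‖ := by
                rw [sub_add_cancel]
            _ ≤ ‖W - ContinuousLinearMap.id ℝ F‖ + ‖(ContinuousLinearMap.id ℝ F)‖ := norm_add_le _ _
            _ ≤ 1 + R := by linarith
        calc ‖(A t).comp W‖ ≤ ‖A t‖ * ‖W‖ := ContinuousLinearMap.opNorm_comp_le _ _
          _ ≤ C * (1 + R) := by
              apply mul_le_mul (hAnorm t) hWn (norm_nonneg _) hC.le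
      · show C * (1 + R) * max (q - τ₀) (τ₀ - p) ≤ R - 0
        rw [sub_zero]
        have hmax : max (q - τ₀) (τ₀ - p) ≤ b - a := by
          apply max_le <;> linarith
        have key : C * (1 + R) * (b - a) ≤ R := by
          have h1 : 1 + R = 1 / (1 - C * (b - a)) := by
            rw [hR]; field_simp; ring
          apply le_of_eq
          rw [h1, hR]
          field_simp
        calc C * (1 + R) * max (q - τ₀) (τ₀ - p) ≤ C * (1 + R) * (b - a) := by
              apply mul_le_mul_of_nonneg_left hmax (by positivity)
          _ ≤ R := key
    obtain ⟨Y, hY0, hYd⟩ := hpl.exists_eq_forall_mem_Icc_hasDerivWithinAt₀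
    exact ⟨Y, hY0, hYd⟩
  -- interior derivative of Y
  have hYat : ∀ t ∈ Ioo p q, HasDerivAt Y ((A t).comp (Y t)) t := by
    intro t ht
    exact (hYd t ⟨ht.1.le, ht.2.le⟩).hasDerivAt (Icc_mem_nhds ht.1 ht.2)
  have hYcont : ContinuousOn Y (Icc p q) := fun t ht => (hYd t ht).continuousWithinAt
  set E1 : ℝ := Real.exp (C * (q - p)) with hE1
  have hqp : 0 < q - p := by linarith
  have hE1pos : 0 < E1 := Real.exp_pos _
  have hE1ge : 1 ≤ E1 := Real.one_le_exp (by positivity)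
  -- Lipschitz dependence of the flow on the initial value
  have hflow : ∀ z₁ z₂ : F, ∀ t ∈ Icc p q, ‖u z₁ t - u z₂ t‖ ≤ ‖z₁ - z₂‖ * E1 := by
    intro z₁ z₂
    have hgr := gronwall_two_sided (f := fun t => u z₁ t - u z₂ t)
      (f' := fun t => V (t, u z₁ t) - V (t, u z₂ t)) (δ := ‖z₁ - z₂‖) hC le_rfl hpτ hτq
      (((hucont z₁).mono hIcc).sub ((hucont z₂).mono hIcc))
      (fun t ht => (hud z₁ t (hIoo ht)).sub (hud z₂ t (hIoo ht)))
      (by simp [hu0])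
      (fun t ht => by simpa using hVlip t (u z₁ t) (u z₂ t))
    intro t ht
    have h2 := hgr t ht
    rwa [gronwallBound_ε0] at h2
  -- uniform closeness of D_y V to A near the curve
  have hucut : ∀ ε : ℝ, 0 < ε → ∃ δ : ℝ, 0 < δ ∧ ∀ t ∈ Icc p q, ∀ y : F, ‖y - u x t‖ ≤ δ →
      ‖fderiv ℝ (fun y' => V (t, y')) y - A t‖ ≤ ε := by
    intro ε hε
    set S : Set (ℝ × F) := (Ioo a b) ×ˢ (univ : Set F) with hS
    have hSopen : IsOpen S := isOpen_Ioo.prod isOpen_univ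
    have hGcont : ContinuousOn (fun pr : ℝ × F =>
        ‖fderiv ℝ (fun y' => V (pr.1, y')) pr.2 - A pr.1‖) S := by
      apply ContinuousOn.norm
      exact hDVcont.continuousOn.sub
        (hAcont.comp (continuous_fst.continuousOn) (fun pr hpr => hpr.1))
    set U : Set (ℝ × F) := S ∩ (fun pr : ℝ × F =>
        ‖fderiv ℝ (fun y' => V (pr.1, y')) pr.2 - A pr.1‖) ⁻¹' (Iio ε) with hU
    have hUopen : IsOpen U := hGcont.isOpen_inter_preimage hSopen isOpen_Iio
    have hKcpt : IsCompact ((fun t => ((t, u x t) : ℝ × F)) '' (Icc p q)) := by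
      apply IsCompact.image_of_continuousOn isCompact_Icc
      exact (continuous_id.continuousOn).prodMk ((hucont x).mono hIcc)
    have hKU : (fun t => ((t, u x t) : ℝ × F)) '' (Icc p q) ⊆ U := by
      rintro _ ⟨t, ht, rfl⟩
      refine ⟨⟨hIcc ht, mem_univ _⟩, ?_⟩
      simpa [hA] using hε
    obtain ⟨δ, hδ0, hδ⟩ := hKcpt.exists_cthickening_subset_open hUopen hKU
    refine ⟨δ, hδ0, ?_⟩
    intro t ht y hy
    have hmem : (t, y) ∈ Metric.cthickening δ ((fun t => ((t, u x t) : ℝ × F)) '' (Icc p q)) := by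
      apply Metric.mem_cthickening_of_dist_le (t, y) (t, u x t) δ
        ((fun t => ((t, u x t) : ℝ × F)) '' (Icc p q)) ⟨t, ht, rfl⟩
      rw [Prod.dist_eq]
      simp only [dist_self, dist_eq_norm]
      exact max_le hδ0.le hy
    exact le_of_lt (hδ hmem).2
  -- the key differentiability estimate
  have hkey : ∀ t ∈ Icc p q, HasFDerivAt (fun z => u z t) (Y t) x := by
    intro t ht
    rw [hasFDerivAt_iff_isLittleO_nhds_zero, Asymptotics.isLittleO_iff]
    intro ε hε
    set ε₂ : ℝ := ε * C / (E1 * E1) with hε₂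
    have hε₂pos : 0 < ε₂ := by positivity
    obtain ⟨δ, hδ0, hδ⟩ := hucut ε₂ hε₂pos
    have hball : Metric.ball (0 : F) (δ / E1) ∈ 𝓝 (0 : F) :=
      Metric.ball_mem_nhds _ (by positivity)
    filter_upwards [hball] with h hh
    have hhn : ‖h‖ * E1 ≤ δ := by
      have h1 : ‖h‖ < δ / E1 := by simpa [dist_eq_norm] using hh
      exact (le_div_iff₀ hE1pos).1 h1.le
    set g : ℝ → F := fun s => u (x + h) s - u x s - Y s h with hg
    have hflow' : ∀ s ∈ Icc p q, ‖u (x + h) s - u x s‖ ≤ ‖h‖ * E1 := by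
      intro s hs
      have := hflow (x + h) x s hs
      simpa using this
    have hgd : ∀ s ∈ Ioo p q, HasDerivAt g
        (V (s, u (x + h) s) - V (s, u x s) - (A s) (Y s h)) s := by
      intro s hs
      have h1 := hud (x + h) s (hIoo hs)
      have h2 := hud x s (hIoo hs)
      have h3 := (hYat s hs).clm_apply (hasDerivAt_const s h)
      simp only [map_zero, add_zero, ContinuousLinearMap.comp_apply] at h3
      exact (h1.sub h2).sub h3
    have hgc : ContinuousOn g (Icc p q) := by
      apply ContinuousOn.sub
      · exact ((hucont (x + h)).mono hIcc).sub ((hucont x).mono hIcc)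
      · exact ((ContinuousLinearMap.apply ℝ F h).continuous).comp_continuousOn hYcont
    have hg0 : ‖g τ₀‖ ≤ 0 := by
      simp [hg, hu0, hY0]
    have hb2 : ∀ s ∈ Ioo p q, ‖V (s, u (x + h) s) - V (s, u x s) - (A s) (Y s h)‖ ≤
        C * ‖g s‖ + ε₂ * (‖h‖ * E1) := by
      intro s hs
      have hs' : s ∈ Icc p q := ⟨hs.1.le, hs.2.le⟩
      have hd1 : ‖u (x + h) s - u x s‖ ≤ δ := le_trans (hflow' s hs') hhn
      have hmv : ‖V (s, u (x + h) s) - V (s, u x s) - (A s) (u (x + h) s - u x s)‖ ≤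
          ε₂ * ‖u (x + h) s - u x s‖ := by
        apply Convex.norm_image_sub_le_of_norm_hasFDerivWithin_le'
          (f := fun y => V (s, y)) (f' := fun y => fderiv ℝ (fun y' => V (s, y')) y)
          (φ := A s) (C := ε₂) (s := Metric.closedBall (u x s) δ)
        · intro y hy
          exact ((hVdiff s) y).hasFDerivAt.hasFDerivWithinAt
        · intro y hy
          apply hδ s hs' y
          simpa [dist_eq_norm] using Metric.mem_closedBall.1 hy
        · exact convex_closedBall _ _
        · exact Metric.mem_closedBall_self hδ0.le
        · rw [Metric.mem_closedBall, dist_eq_norm]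
          exact hd1
      have hsplit : V (s, u (x + h) s) - V (s, u x s) - (A s) (Y s h) =
          (V (s, u (x + h) s) - V (s, u x s) - (A s) (u (x + h) s - u x s)) + (A s) (g s) := by
        rw [hg]
        simp only [map_sub]
        abel
      rw [hsplit]
      calc ‖_ + (A s) (g s)‖ ≤ ‖V (s, u (x + h) s) - V (s, u x s) -
            (A s) (u (x + h) s - u x s)‖ + ‖(A s) (g s)‖ := norm_add_le _ _
        _ ≤ ε₂ * (‖h‖ * E1) + C * ‖g s‖ := by
            apply add_le_add
            · exact hmv.trans (by
                apply mul_le_mul_of_nonneg_left (hflow' s hs') hε₂pos.le)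
            · exact ((A s).le_opNorm _).trans
                (mul_le_mul_of_nonneg_right (hAnorm s) (norm_nonneg _))
        _ = C * ‖g s‖ + ε₂ * (‖h‖ * E1) := by ring
    have hgr := gronwall_two_sided (δ := 0) hC (by positivity) hpτ hτq hgc hgd hg0 hb2 t ht
    have hfin : gronwallBound 0 C (ε₂ * (‖h‖ * E1)) (q - p) ≤ ε * ‖h‖ := by
      rw [gronwallBound_of_K_ne_0 hC.ne']
      have hexp : Real.exp (C * (q - p)) - 1 ≤ E1 := by
        rw [hE1]; linarith [Real.exp_pos (C * (q - p))]
      have hcoef : 0 ≤ ε₂ * (‖h‖ * E1) / C := by positivity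
      have h5 : ε₂ * (‖h‖ * E1) / C * (Real.exp (C * (q - p)) - 1) ≤
          ε₂ * (‖h‖ * E1) / C * E1 := mul_le_mul_of_nonneg_left hexp hcoef
      have h6 : ε₂ * (‖h‖ * E1) / C * E1 = ε * ‖h‖ := by
        rw [hε₂]
        field_simp
      simp only [zero_mul, zero_add]
      linarith
    exact le_trans hgr hfin
  exact ⟨Y, hY0, hkey, fun t ht => hYat t ht⟩

/-- **The linear variational equation.**
Let `V : ℝ × ℝⁿ → ℝⁿ` be continuous and bounded, uniformly Lipschitz in the second variable
with constant `C > 0`, such that `y ↦ V (τ, y)` is Fréchet differentiable for each `τ` and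
`(τ, y) ↦ D_y V (τ, y)` is continuous. Let `I₀ = Ioo a b` be an open interval of length less
than `1/C`, let `θ` be a local flow map for `V` on `I₀`, fix `τ₀ ∈ I₀` and `x`, and set
`Y τ := D_x θ (τ, τ₀, x)`. Then `Y` exists, `Y τ₀ = id`, `τ ↦ Y τ` is differentiable on
`I₀`, and `Y' τ = D_y V (τ, θ τ τ₀ x) ∘ Y τ` for all `τ ∈ I₀`. -/
theorem stmt_7 {n : ℕ} (hn : 1 ≤ n)
    (V : ℝ × EuclideanSpace ℝ (Fin n) → EuclideanSpace ℝ (Fin n))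
    (C : ℝ) (hC : 0 < C)
    (hVcont : Continuous V)
    (hVbdd : ∃ M : ℝ, ∀ p, ‖V p‖ ≤ M)
    (hVlip : ∀ (τ : ℝ) (y₁ y₂ : EuclideanSpace ℝ (Fin n)),
      ‖V (τ, y₁) - V (τ, y₂)‖ ≤ C * ‖y₁ - y₂‖)
    (hVdiff : ∀ τ : ℝ, Differentiable ℝ (fun y => V (τ, y)))
    (hDVcont : Continuous (fun p : ℝ × EuclideanSpace ℝ (Fin n) =>
      fderiv ℝ (fun y => V (p.1, y)) p.2))
    (a b : ℝ) (hab : a < b) (hlen : b - a < 1 / C)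
    (θ : ℝ → ℝ → EuclideanSpace ℝ (Fin n) → EuclideanSpace ℝ (Fin n))
    (hθ : IsLocalFlowMap V (Set.Ioo a b) θ)
    (τ₀ : ℝ) (hτ₀ : τ₀ ∈ Set.Ioo a b) (x : EuclideanSpace ℝ (Fin n)) :
    (∀ τ ∈ Set.Ioo a b, DifferentiableAt ℝ (fun z => θ τ τ₀ z) x) ∧
    fderiv ℝ (fun z => θ τ₀ τ₀ z) x = ContinuousLinearMap.id ℝ (EuclideanSpace ℝ (Fin n)) ∧
    ∀ τ ∈ Set.Ioo a b,
      HasDerivAt (fun s => fderiv ℝ (fun z => θ s τ₀ z) x)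
        ((fderiv ℝ (fun y => V (τ, y)) (θ τ τ₀ x)).comp
          (fderiv ℝ (fun z => θ τ τ₀ z) x)) τ := by
  have hu0 : ∀ z, (fun z τ => θ τ τ₀ z) z τ₀ = z := fun z => (hθ τ₀ hτ₀ z).1
  have hud : ∀ z, ∀ τ ∈ Set.Ioo a b,
      HasDerivAt ((fun z τ => θ τ τ₀ z) z) (V (τ, (fun z τ => θ τ τ₀ z) z τ)) τ :=
    fun z => (hθ τ₀ hτ₀ z).2
  have main : ∀ τ ∈ Set.Ioo a b,
      HasFDerivAt (fun z => θ τ τ₀ z) (fderiv ℝ (fun z => θ τ τ₀ z) x) x ∧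
      (τ = τ₀ → fderiv ℝ (fun z => θ τ τ₀ z) x =
        ContinuousLinearMap.id ℝ (EuclideanSpace ℝ (Fin n))) ∧
      HasDerivAt (fun s => fderiv ℝ (fun z => θ s τ₀ z) x)
        ((fderiv ℝ (fun y => V (τ, y)) (θ τ τ₀ x)).comp
          (fderiv ℝ (fun z => θ τ τ₀ z) x)) τ := by
    intro τ hτ
    set p : ℝ := (a + min τ τ₀) / 2 with hp
    set q : ℝ := (max τ τ₀ + b) / 2 with hq
    have hminτ : a < min τ τ₀ := lt_min hτ.1 hτ₀.1
    have hmaxb : max τ τ₀ < b := max_lt hτ.2 hτ₀.2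
    have hap : a < p := by rw [hp]; linarith
    have hpm : p < min τ τ₀ := by rw [hp]; linarith
    have hmq : max τ τ₀ < q := by rw [hq]; linarith
    have hqb : q < b := by rw [hq]; linarith
    have hpτ₀ : p < τ₀ := lt_of_lt_of_le hpm (min_le_right _ _)
    have hτ₀q : τ₀ < q := lt_of_le_of_lt (le_max_right _ _) hmq
    have hpτ : p < τ := lt_of_lt_of_le hpm (min_le_left _ _)
    have hτq : τ < q := lt_of_le_of_lt (le_max_left _ _) hmq
    have hτIoo : τ ∈ Set.Ioo p q := ⟨hpτ, hτq⟩
    obtain ⟨Y, hY0, hkey, hYode⟩ := variational_master V C hC hVlip hVdiff hDVcont a b hlen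
      (fun z τ => θ τ τ₀ z) τ₀ x hu0 hud p q hap hpτ₀ hτ₀q hqb
    have heq : ∀ s ∈ Set.Ioo p q, fderiv ℝ (fun z => θ s τ₀ z) x = Y s := by
      intro s hs
      exact (hkey s ⟨hs.1.le, hs.2.le⟩).fderiv
    refine ⟨?_, ?_, ?_⟩
    · rw [heq τ hτIoo]
      exact hkey τ ⟨hpτ.le, hτq.le⟩
    · intro hττ₀
      rw [hττ₀, heq τ₀ ⟨hpτ₀, hτ₀q⟩, hY0]
    · have hev : (fun s => fderiv ℝ (fun z => θ s τ₀ z) x) =ᶠ[𝓝 τ] Y := by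
        filter_upwards [Ioo_mem_nhds hpτ hτq] with s hs using heq s hs
      have h2 := (hYode τ hτIoo).congr_of_eventuallyEq hev
      rw [heq τ hτIoo]
      exact h2
  exact ⟨fun τ hτ => (main τ hτ).1.differentiableAt,
    (main τ₀ hτ₀).2.1 rfl,
    fun τ hτ => (main τ hτ).2.2⟩
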